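/- Assume 2g − 2 + n > 0. The forgetful maps SP⁺_{g,n} → C_{g,n} (sending (G,P,s) to (G,P)) and SP⁺_{g,n} → S_{g,n} (sending (G,P,s) to G) are quotients of posets for every g, and for g > 0 the forgetful map SP⁻_{g,n} → S_{g,n} is a quotient of posets. -/

import Mathlib

/-!
Common combinatorial preliminaries: weighted graphs with legs, contractions,
spin structures, following Caporaso–Melo–Pacini, "Tropicalizing the moduli
space of spin curves".
-/

attribute [local instance] Classical.propDecidable

noncomputable section

/-- A weighted graph with legs.  Edges are recorded as elements of a finite
type `E` together with their (unordered) pair of endpoints `ends e : Sym2 V`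
(a loop corresponds to a diagonal pair); legs are elements of a finite type
`Lg` with an endpoint map `legEnd`; `w` is the weight function. -/
structure LegGraph : Type 1 where
  V : Type
  E : Type
  Lg : Type
  fV : Fintype V
  fE : Fintype E
  fL : Fintype Lg
  dV : DecidableEq V
  dE : DecidableEq E
  dL : DecidableEq Lg
  neV : Nonempty V
  ends : E → Sym2 V
  legEnd : Lg → V
  w : V → ℕ

attribute [instance] LegGraph.fV LegGraph.fE LegGraph.fL LegGraph.dV LegGraph.dE LegGraph.dL LegGraph.neV

namespace LegGraph

variable (G : LegGraph)

/-- The multiplicity of the vertex `v` in the edge `e` (`2` for a loop at `v`). -/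
def degMul (v : G.V) (e : G.E) : ℕ :=
  Sym2.lift ⟨fun a b => (if a = v then 1 else 0) + (if b = v then 1 else 0),
    fun _ _ => add_comm _ _⟩ (G.ends e)

/-- The degree of a vertex: number of non-leg half-edges ending at it. -/
def deg (v : G.V) : ℕ := ∑ e, G.degMul v e

/-- The number of legs ending at a vertex. -/
def legsAt (v : G.V) : ℕ := (Finset.univ.filter fun l => G.legEnd l = v).card

/-- The number of loops based at a vertex. -/
def loops (v : G.V) : ℕ := (Finset.univ.filter fun e => G.ends e = Sym2.diag v).card

/-- The boundary map `∂ : E_G → V_G` over `F₂`, sending an edge to the sum of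
its two endpoints. -/
def boundary : (G.E → ZMod 2) →ₗ[ZMod 2] (G.V → ZMod 2) where
  toFun x := fun v => ∑ e, x e * (G.degMul v e : ZMod 2)
  map_add' x y := by
    funext v
    simp [add_mul, Finset.sum_add_distrib]
  map_smul' c x := by
    funext v
    simp [Finset.mul_sum, mul_assoc]

/-- The `F₂`-indicator vector of a set of edges. -/
def indicator (P : Finset G.E) : G.E → ZMod 2 := fun e => if e ∈ P then 1 else 0

/-- A subset of edges is cyclic if it lies in the cycle space `C_G = ker ∂`,
i.e. its indicator vector is killed by the boundary map. -/
def IsCyclic (P : Finset G.E) : Prop := G.boundary (G.indicator P) = 0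

/-- Adjacency through an edge belonging to `P`. -/
def PAdj (P : Finset G.E) (u v : G.V) : Prop :=
  ∃ e ∈ P, u ∈ G.ends e ∧ v ∈ G.ends e

/-- The vertex set of the contraction `G/P`: connected components of `(V, P)`. -/
def CompV (P : Finset G.E) : Type := Quot (G.PAdj P)

instance (P : Finset G.E) : Finite (G.CompV P) := Quot.finite _
instance (P : Finset G.E) : Fintype (G.CompV P) := Fintype.ofFinite _
instance (P : Finset G.E) : Nonempty (G.CompV P) := G.neV.map (Quot.mk _)

/-- The set of vertices of `G` lying in a given component. -/
def fiberV (P : Finset G.E) (x : G.CompV P) : Finset G.V :=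
  Finset.univ.filter fun v => Quot.mk (G.PAdj P) v = x

/-- The set of edges of `P` lying in a given component. -/
def fiberE (P : Finset G.E) (x : G.CompV P) : Finset G.E :=
  P.filter fun e => ∀ v ∈ G.ends e, Quot.mk (G.PAdj P) v = x

/-- The weight of a vertex `x` of `G/P`: the genus of its preimage, i.e. the
sum of the weights of the vertices in the component plus its first Betti
number `#edges - #vertices + 1`. -/
def quotWeight (P : Finset G.E) (x : G.CompV P) : ℕ :=
  (∑ v ∈ G.fiberV P x, G.w v) + ((G.fiberE P x).card + 1 - (G.fiberV P x).card)

/-- Connectedness of the graph. -/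
def Connected : Prop := ∀ u v : G.V, Relation.EqvGen (G.PAdj Finset.univ) u v

/-- The number of connected components `c(G)`. -/
def numComp : ℕ := Nat.card (G.CompV Finset.univ)

/-- The first Betti number `b₁(G) = |E| - |V| + c(G)`. -/
def b1 : ℕ := Fintype.card G.E + G.numComp - Fintype.card G.V

/-- The genus `g(G) = Σ_v w(v) + b₁(G)`. -/
def genus : ℕ := (∑ v, G.w v) + G.b1

/-- The number of legs. -/
def numLegs : ℕ := Fintype.card G.Lg

/-- Stability: connected and `2w(v) - 2 + deg(v) + ℓ(v) > 0` at every vertex. -/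
def Stable : Prop :=
  G.Connected ∧ ∀ v : G.V, 2 < 2 * G.w v + G.deg v + G.legsAt v

/-- `G` is Eulerian (cyclic) if every vertex has even degree, i.e. the set of
all edges lies in the cycle space. -/
def Eulerian : Prop := G.IsCyclic Finset.univ

/-- A basic graph: a stable cyclic (Eulerian) graph of genus `≥ 2` with at
least one edge, all weights `≤ 1`, and `w(v) + deg(v) + ℓ(v) ≤ 4` at every
vertex with equality only if there is a loop at `v`. -/
def IsBasic : Prop :=
  G.Stable ∧ 2 ≤ G.genus ∧ Nonempty G.E ∧ G.Eulerian ∧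
  (∀ v, G.w v ≤ 1) ∧
  (∀ v, G.w v + G.deg v + G.legsAt v ≤ 4) ∧
  (∀ v, G.w v + G.deg v + G.legsAt v = 4 → 1 ≤ G.loops v)

/-- `c⁺`: the number of vertices of `G/P` of positive weight, i.e. the number
of connected components of `P̄` of positive genus. -/
def cPlus (P : Finset G.E) : ℕ :=
  (Finset.univ.filter fun x : G.CompV P => 0 < G.quotWeight P x).card

/-- The contracted graph `G/P`. -/
def contract (P : Finset G.E) : LegGraph where
  V := G.CompV P
  E := {e : G.E // e ∉ P}
  Lg := G.Lg
  fV := inferInstance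
  fE := inferInstance
  fL := G.fL
  dV := Classical.decEq _
  dE := inferInstance
  dL := G.dL
  neV := inferInstance
  ends := fun e => (G.ends e.1).map (Quot.mk (G.PAdj P))
  legEnd := fun l => Quot.mk (G.PAdj P) (G.legEnd l)
  w := G.quotWeight P

/-- An ordered pair of endpoints of an edge. -/
def endPair (e : G.E) : G.V × G.V := Classical.choose (Quot.exists_rep (G.ends e))

end LegGraph

/-- A spin structure on a graph `G`: a cyclic subset `P` of edges and a sign
function on the vertices of `G/P` vanishing at all vertices of weight `0`. -/
structure SpinStructure (G : LegGraph) where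
  P : Finset G.E
  cyclic : G.IsCyclic P
  s : G.CompV P → ZMod 2
  vanish : ∀ x, G.quotWeight P x = 0 → s x = 0

/-- The parity of a spin structure: the parity of `Σ_{v ∈ V(G/P)} s(v)`. -/
def SpinStructure.parity {G : LegGraph} (σ : SpinStructure G) : ZMod 2 := ∑ x, σ.s x

/-- A contraction of graphs `γ : G → G' = G/F`: the edges of `G'` are
identified with `E(G) ∖ F`, the legs of `G'` with those of `G`; the vertex
map is surjective, its fibers are exactly the connected components of
`(V(G), F)`, endpoints and legs are compatible, and the weight of a vertex of
`G'` is the genus of its preimage. -/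
structure Contraction (G G' : LegGraph) where
  F : Finset G.E
  vMap : G.V → G'.V
  eEquiv : G'.E ≃ {e : G.E // e ∉ F}
  lEquiv : G'.Lg ≃ G.Lg
  vSurj : Function.Surjective vMap
  ends_compat : ∀ e' : G'.E, G'.ends e' = (G.ends (eEquiv e').1).map vMap
  leg_compat : ∀ l' : G'.Lg, G'.legEnd l' = vMap (G.legEnd (lEquiv l'))
  collapse : ∀ e ∈ F, ∀ u ∈ G.ends e, ∀ v ∈ G.ends e, vMap u = vMap v
  fiber_conn : ∀ u v : G.V, vMap u = vMap v → Relation.EqvGen (G.PAdj F) u v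
  w_compat : ∀ v' : G'.V,
    G'.w v' = (∑ v ∈ Finset.univ.filter (fun v => vMap v = v'), G.w v)
      + (((F.filter fun e => ∀ u ∈ G.ends e, vMap u = v').card + 1)
          - (Finset.univ.filter fun v => vMap v = v').card)

namespace Contraction

variable {G G' : LegGraph} (γ : Contraction G G')

/-- The induced map `γ^E_* : E_G → E_{G'}` (γ^E_*(e) = e if e ∉ F, 0 else). -/
def eStar : (G.E → ZMod 2) →ₗ[ZMod 2] (G'.E → ZMod 2) where
  toFun x := fun e' => x (γ.eEquiv e').1
  map_add' _ _ := rfl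
  map_smul' _ _ := rfl

/-- The induced map `γ^V_* : V_G → V_{G'}`. -/
def vStar : (G.V → ZMod 2) →ₗ[ZMod 2] (G'.V → ZMod 2) where
  toFun x := fun v' => ∑ v ∈ Finset.univ.filter (fun v => γ.vMap v = v'), x v
  map_add' x y := by
    funext v'
    simp [Finset.sum_add_distrib]
  map_smul' c x := by
    funext v'
    simp [Finset.mul_sum]

/-- The pushforward `γ_* P = P ∖ F` of a set of edges, as a subset of `E(G')`. -/
def pushE (P : Finset G.E) : Finset G'.E :=
  Finset.univ.filter fun e' => (γ.eEquiv e' : {e : G.E // e ∉ γ.F}).1 ∈ P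

/-- The graph of the induced map `γ̄ : V(G/P) → V(G'/P')` on components. -/
def compMapsTo (P : Finset G.E) (P' : Finset G'.E)
    (x : G.CompV P) (x' : G'.CompV P') : Prop :=
  ∃ v : G.V, Quot.mk (G.PAdj P) v = x ∧ Quot.mk (G'.PAdj P') (γ.vMap v) = x'

/-- The pushforward sign function: `s'(v') = Σ_{v ∈ γ̄⁻¹(v')} s(v)`. -/
def pushS (P : Finset G.E) (s : G.CompV P → ZMod 2) :
    G'.CompV (γ.pushE P) → ZMod 2 :=
  fun x' => ∑ x ∈ Finset.univ.filter
    (fun x => γ.compMapsTo P (γ.pushE P) x x'), s x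

/-- `γ_* σ = σ'` for spin structures. -/
def SpinMapsTo (σ : SpinStructure G) (σ' : SpinStructure G') : Prop :=
  σ'.P = γ.pushE σ.P ∧ HEq σ'.s (γ.pushS σ.P σ.s)

end Contraction

/-- An automorphism of a graph: weight-preserving bijection on vertices,
bijection on edges compatible with endpoints, fixing every leg. -/
structure GraphAut (G : LegGraph) where
  vE : G.V ≃ G.V
  eE : G.E ≃ G.E
  ends_compat : ∀ e, G.ends (eE e) = (G.ends e).map vE
  w_compat : ∀ v, G.w (vE v) = G.w v
  leg_fix : ∀ l, G.legEnd l = vE (G.legEnd l)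

namespace GraphAut

variable {G : LegGraph}

/-- Composition of automorphisms (`α.comp β` acts by `β` first, then `α`). -/
def comp (α β : GraphAut G) : GraphAut G where
  vE := β.vE.trans α.vE
  eE := β.eE.trans α.eE
  ends_compat e := by
    simp only [Equiv.trans_apply, Equiv.coe_trans]
    rw [α.ends_compat, β.ends_compat, Sym2.map_map]
  w_compat v := by
    simp only [Equiv.trans_apply]
    rw [α.w_compat, β.w_compat]
  leg_fix l := by
    simp only [Equiv.trans_apply]
    rw [← β.leg_fix, ← α.leg_fix]

/-- `α_* σ = σ'` for an automorphism `α` and spin structures `σ, σ'`. -/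
def SpinMapsTo (α : GraphAut G) (σ σ' : SpinStructure G) : Prop :=
  σ'.P = σ.P.image α.eE ∧
  ∀ v : G.V, σ'.s (Quot.mk (G.PAdj σ'.P) (α.vE v)) = σ.s (Quot.mk (G.PAdj σ.P) v)

/-- `α` preserves the spin structure `σ`, i.e. `α_*(P,s) = (P,s)`. -/
def PreservesSpin (α : GraphAut G) (σ : SpinStructure G) : Prop :=
  α.SpinMapsTo σ σ

end GraphAut

/-- The graph `P̄ = G - R°` where `R = E ∖ P`: same vertices, edges `P`, and
the legs of `G` together with a pair of new legs for each edge of `R`, placed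
at its two endpoints. -/
def LegGraph.legify (G : LegGraph) (P : Finset G.E) : LegGraph where
  V := G.V
  E := {e : G.E // e ∈ P}
  Lg := G.Lg ⊕ ({e : G.E // e ∉ P} × Bool)
  fV := G.fV
  fE := inferInstance
  fL := inferInstance
  dV := G.dV
  dE := inferInstance
  dL := inferInstance
  neV := G.neV
  ends := fun e => G.ends e.1
  legEnd := fun l =>
    match l with
    | Sum.inl l => G.legEnd l
    | Sum.inr (e, b) => if b then (G.endPair e.1).1 else (G.endPair e.1).2
  w := G.w

/-- `G` is a stable graph of genus `g` with `n` legs. -/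
def StG (g n : ℕ) (G : LegGraph) : Prop := G.Stable ∧ G.genus = g ∧ G.numLegs = n

/-- Objects of the poset `C_{g,n}` before taking isomorphism classes. -/
def CycObj : Type 1 := Σ G : LegGraph, Finset G.E

/-- Objects of the poset `SP_{g,n}` before taking isomorphism classes. -/
def SpinObj : Type 1 := Σ G : LegGraph, SpinStructure G

/-- Order on graphs: `G ≥ G'` iff there is a contraction `G → G'`. -/
def GraphGe (G G' : LegGraph) : Prop := Nonempty (Contraction G G')

/-- Order on `C_{g,n}`: `(G,P) ≥ (G',P')` iff some contraction pushes `P` to `P'`. -/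
def CycGe (a b : CycObj) : Prop := ∃ γ : Contraction a.1 b.1, γ.pushE a.2 = b.2

/-- Order on `SP_{g,n}`: `(G,P,s) ≥ (G',P',s')` iff some contraction pushes
`(P,s)` to `(P',s')`. -/
def SpinGe (a b : SpinObj) : Prop := ∃ γ : Contraction a.1 b.1, γ.SpinMapsTo a.2 b.2

/-- `q : X → Y` is a quotient of posets (for the `≥`-relations `geA`, `geB`):
it is surjective, order-preserving, and any relation downstairs lifts. -/
def IsPosetQuotient {α : Sort*} {β : Sort*}
    (geA : α → α → Prop) (geB : β → β → Prop) (q : α → β) : Prop :=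
  Function.Surjective q ∧
  (∀ a a', geA a a' → geB (q a) (q a')) ∧
  (∀ b b', geB b b' → ∃ a a', q a = b ∧ q a' = b' ∧ geA a a')

/-- Strict order `x > y` associated to a `≥`-relation. -/
def StrictGt {α : Sort*} (ge : α → α → Prop) (x y : α) : Prop := ge x y ∧ ¬ ge y x

/-- `x` covers `y`. -/
def Covers {α : Sort*} (ge : α → α → Prop) (x y : α) : Prop :=
  StrictGt ge x y ∧ ¬ ∃ z, StrictGt ge x z ∧ StrictGt ge z y

/-- `ρ` is a rank function for the `≥`-relation `ge`. -/
def IsRankFn {α : Sort*} (ge : α → α → Prop) (ρ : α → ℕ) : Prop :=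
  (∀ x y, StrictGt ge x y → ρ y < ρ x) ∧
  (∀ x y, Covers ge x y → ρ x = ρ y + 1)

open Finset

namespace LegGraph

variable (G : LegGraph)

lemma ends_exists (e : G.E) : ∃ a b : G.V, G.ends e = s(a, b) := by
  obtain ⟨⟨a, b⟩, h⟩ := Quot.exists_rep (G.ends e)
  exact ⟨a, b, h.symm⟩

lemma degMul_eq {a b : G.V} {e : G.E} (h : G.ends e = s(a, b)) (v : G.V) :
    G.degMul v e = (if a = v then 1 else 0) + (if b = v then 1 else 0) := by
  unfold degMul
  rw [h, Sym2.lift_mk]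

lemma mem_of_degMul_ne {v : G.V} {e : G.E} (h : G.degMul v e ≠ 0) : v ∈ G.ends e := by
  obtain ⟨a, b, hab⟩ := G.ends_exists e
  rw [G.degMul_eq hab] at h
  rw [hab, Sym2.mem_iff]
  by_contra hc
  push_neg at hc
  simp [Ne.symm hc.1, Ne.symm hc.2] at h

lemma sum_degMul {a b : G.V} {e : G.E} (h : G.ends e = s(a, b)) (S : Finset G.V) :
    (∑ v ∈ S, (G.degMul v e : ZMod 2)) =
      (if a ∈ S then (1 : ZMod 2) else 0) + (if b ∈ S then 1 else 0) := by
  simp_rw [G.degMul_eq h]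
  push_cast
  rw [Finset.sum_add_distrib, Finset.sum_ite_eq, Finset.sum_ite_eq]

lemma mk_eq_of_mem_ends {Q : Finset G.E} {e : G.E} (he : e ∈ Q) {u v : G.V}
    (hu : u ∈ G.ends e) (hv : v ∈ G.ends e) :
    Quot.mk (G.PAdj Q) u = Quot.mk (G.PAdj Q) v :=
  Quot.sound ⟨e, he, hu, hv⟩

lemma mem_fiberV {Q : Finset G.E} {x : G.CompV Q} {v : G.V} :
    v ∈ G.fiberV Q x ↔ Quot.mk (G.PAdj Q) v = x := by
  simp [fiberV]

/-- The boundary map restricted to a subset `Q` of the edges. -/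
def bnd (Q : Finset G.E) : ({e : G.E // e ∈ Q} → ZMod 2) →ₗ[ZMod 2] (G.V → ZMod 2) where
  toFun x := fun v => ∑ e : {e : G.E // e ∈ Q}, x e * (G.degMul v e.1 : ZMod 2)
  map_add' x y := by funext v; simp [add_mul, Finset.sum_add_distrib]
  map_smul' c x := by funext v; simp [Finset.mul_sum, mul_assoc]

/-- Summing a function over the connected components of `(V, Q)`. -/
def compSum (Q : Finset G.E) : (G.V → ZMod 2) →ₗ[ZMod 2] (G.CompV Q → ZMod 2) where
  toFun f := fun x => ∑ v ∈ G.fiberV Q x, f v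
  map_add' x y := by funext v; simp [Finset.sum_add_distrib]
  map_smul' c x := by funext v; simp [Finset.mul_sum]

lemma compSum_surjective (Q : Finset G.E) : Function.Surjective (G.compSum Q) := by
  intro gf
  refine ⟨fun v => if (Quot.mk (G.PAdj Q) v).out = v then gf (Quot.mk (G.PAdj Q) v) else 0, ?_⟩
  funext x
  show (∑ v ∈ G.fiberV Q x, _) = gf x
  rw [Finset.sum_congr rfl (fun v hv => ?_), Finset.sum_ite_eq (G.fiberV Q x) x.out fun _ => gf x]
  · rw [if_pos (G.mem_fiberV.mpr (Quot.out_eq x))]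
  · rw [G.mem_fiberV.mp hv]

lemma range_bnd_le (Q : Finset G.E) :
    LinearMap.range (G.bnd Q) ≤ LinearMap.ker (G.compSum Q) := by
  rintro f ⟨x, rfl⟩
  rw [LinearMap.mem_ker]
  funext c
  show (∑ v ∈ G.fiberV Q c, ∑ e : {e : G.E // e ∈ Q}, x e * (G.degMul v e.1 : ZMod 2)) = 0
  rw [Finset.sum_comm]
  refine Finset.sum_eq_zero fun e _ => ?_
  rw [← Finset.mul_sum]
  obtain ⟨a, b, hab⟩ := G.ends_exists e.1
  rw [G.sum_degMul hab]
  have hmk : a ∈ G.fiberV Q c ↔ b ∈ G.fiberV Q c := by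
    rw [G.mem_fiberV, G.mem_fiberV,
      G.mk_eq_of_mem_ends e.2 (by rw [hab]; exact Sym2.mem_mk_left a b)
        (by rw [hab]; exact Sym2.mem_mk_right a b)]
  have h2 : (1 : ZMod 2) + 1 = 0 := by decide
  by_cases ha : a ∈ G.fiberV Q c
  · rw [if_pos ha, if_pos (hmk.mp ha), h2, mul_zero]
  · rw [if_neg ha, if_neg (fun hb => ha (hmk.mpr hb))]
    simp

lemma pair_mem_range (Q : Finset G.E) (u v : G.V)
    (h : Quot.mk (G.PAdj Q) u = Quot.mk (G.PAdj Q) v) :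
    (fun w => (if w = u then (1 : ZMod 2) else 0) + (if w = v then 1 else 0))
      ∈ LinearMap.range (G.bnd Q) := by
  have key : ∀ t : ZMod 2, t + t = 0 := by decide
  rw [Quot.eq] at h
  induction h with
  | rel a b hab =>
    by_cases hab' : a = b
    · subst hab'
      refine ⟨0, ?_⟩
      rw [map_zero]
      funext w
      exact (key _).symm
    · obtain ⟨e, heQ, ha, hb⟩ := hab
      refine ⟨fun e' => if e'.1 = e then 1 else 0, ?_⟩
      funext w
      show (∑ e' : {e : G.E // e ∈ Q}, _) = _
      rw [Finset.sum_eq_single (⟨e, heQ⟩ : {e : G.E // e ∈ Q})]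
      · obtain ⟨p, q, hpq⟩ := G.ends_exists e
        show (if e = e then (1 : ZMod 2) else 0) * (G.degMul w e : ZMod 2) = _
        rw [if_pos rfl, one_mul]
        rw [hpq, Sym2.mem_iff] at ha hb
        have hd : (G.degMul w e : ZMod 2)
            = (if p = w then 1 else 0) + (if q = w then 1 else 0) := by
          rw [G.degMul_eq hpq]; push_cast; ring
        rcases ha with ha | ha <;> rcases hb with hb | hb <;> subst ha <;> subst hb
        · exact absurd rfl hab'
        · rw [hd]; simp only [eq_comm]
        · rw [hd]; simp only [eq_comm]; ring
        · exact absurd rfl hab'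
      · intro e' _ hne
        show (if e'.1 = e then (1 : ZMod 2) else 0) * _ = 0
        rw [if_neg (fun hc => hne (Subtype.ext hc)), zero_mul]
      · intro hmem; exact absurd (Finset.mem_univ _) hmem
  | refl a =>
    refine ⟨0, ?_⟩
    rw [map_zero]
    funext w
    exact (key _).symm
  | symm a b _ ih =>
    obtain ⟨x, hx⟩ := ih
    refine ⟨x, ?_⟩
    rw [hx]
    funext w
    ring
  | trans a b c _ _ ih1 ih2 =>
    obtain ⟨x1, hx1⟩ := ih1
    obtain ⟨x2, hx2⟩ := ih2
    refine ⟨x1 + x2, ?_⟩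
    rw [map_add, hx1, hx2]
    funext w
    simp only [Pi.add_apply]
    linear_combination key (if w = b then (1 : ZMod 2) else 0)

end LegGraph
namespace LegGraph

variable (G : LegGraph)

end LegGraph

lemma zmod2_eq_one : ∀ {t : ZMod 2}, t ≠ 0 → t = 1 := by decide

namespace LegGraph

variable (G : LegGraph)

lemma ker_le_range_aux (Q : Finset G.E) :
    ∀ n : ℕ, ∀ f : G.V → ZMod 2, (univ.filter fun v => f v ≠ 0).card ≤ n →
      f ∈ LinearMap.ker (G.compSum Q) → f ∈ LinearMap.range (G.bnd Q) := by
  have key : ∀ t : ZMod 2, t + t = 0 := by decide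
  intro n
  induction n with
  | zero =>
    intro f hcard hker
    have hf : f = 0 := by
      funext v
      show f v = 0
      by_contra hv
      have : v ∈ univ.filter fun v => f v ≠ 0 := by simp [hv]
      have := Finset.card_pos.mpr ⟨v, this⟩
      omega
    rw [hf]
    exact zero_mem _
  | succ n ih =>
    intro f hcard hker
    by_cases hf0 : f = 0
    · rw [hf0]; exact zero_mem _
    · obtain ⟨u, hu⟩ := Function.ne_iff.mp hf0
      rw [Pi.zero_apply] at hu
      have hu1 : f u = 1 := zmod2_eq_one hu
      have hsum : (∑ v ∈ G.fiberV Q (Quot.mk (G.PAdj Q) u), f v) = 0 :=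
        congrFun (LinearMap.mem_ker.mp hker) (Quot.mk (G.PAdj Q) u)
      have humem : u ∈ G.fiberV Q (Quot.mk (G.PAdj Q) u) := G.mem_fiberV.mpr rfl
      have hex : ∃ v ∈ G.fiberV Q (Quot.mk (G.PAdj Q) u), v ≠ u ∧ f v ≠ 0 := by
        by_contra hno
        push_neg at hno
        rw [Finset.sum_eq_single u (fun b hb hbu => by
          by_contra hb0
          exact hb0 (hno b hb hbu)) (fun h => absurd humem h), hu1] at hsum
        exact one_ne_zero hsum
      obtain ⟨v, hvmem, hvu, hv0⟩ := hex
      have hv1 : f v = 1 := zmod2_eq_one hv0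
      have hpair := G.pair_mem_range Q u v (G.mem_fiberV.mp hvmem).symm
      set p : G.V → ZMod 2 :=
        fun w => (if w = u then (1 : ZMod 2) else 0) + (if w = v then 1 else 0) with hp
      have hfp : f + p ∈ LinearMap.ker (G.compSum Q) :=
        add_mem hker (G.range_bnd_le Q hpair)
      have hsub : (univ.filter fun w => (f + p) w ≠ 0)
          ⊆ (univ.filter fun w => f w ≠ 0).erase u := by
        intro w hw
        simp only [Finset.mem_filter, Finset.mem_univ, true_and, Pi.add_apply] at hw
        rcases eq_or_ne w u with rfl | hwu
        · exfalso
          apply hw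
          rw [hp]
          simp only [if_pos rfl, if_neg (fun h => hvu (h ▸ rfl) : ¬ w = v)]
          rw [hu1]
          exact key 1
        · rcases eq_or_ne w v with rfl | hwv
          · exfalso
            apply hw
            rw [hp]
            simp only [if_pos rfl, if_neg hwu]
            rw [hv1, zero_add]
            exact key 1
          · have hpw : p w = 0 := by rw [hp]; simp [hwu, hwv]
            rw [Finset.mem_erase]
            refine ⟨hwu, ?_⟩
            simp only [Finset.mem_filter, Finset.mem_univ, true_and]
            intro hfw
            exact hw (by rw [hfw, hpw, zero_add])
      have humem' : u ∈ univ.filter fun w => f w ≠ 0 := by simp [hu]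
      have hcard' : (univ.filter fun w => (f + p) w ≠ 0).card ≤ n := by
        have h1 := Finset.card_le_card hsub
        have h2 := Finset.card_erase_of_mem humem'
        have h3 := Finset.card_pos.mpr ⟨u, humem'⟩
        omega
      have hrec := ih (f + p) hcard' hfp
      have hfeq : f = (f + p) + p := by
        funext w
        simp only [Pi.add_apply]
        linear_combination (key (p w)).symm
      rw [hfeq]
      exact add_mem hrec hpair

lemma range_bnd (Q : Finset G.E) :
    LinearMap.range (G.bnd Q) = LinearMap.ker (G.compSum Q) := by
  refine le_antisymm (G.range_bnd_le Q) ?_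
  intro f hf
  exact G.ker_le_range_aux Q _ f le_rfl hf

lemma finrank_ker_compSum (Q : Finset G.E) :
    Module.finrank (ZMod 2) (LinearMap.ker (G.compSum Q)) + Nat.card (G.CompV Q)
      = Fintype.card G.V := by
  have h := LinearMap.finrank_range_add_finrank_ker (G.compSum Q)
  rw [LinearMap.range_eq_top.mpr (G.compSum_surjective Q), finrank_top,
    Module.finrank_fintype_fun_eq_card, Module.finrank_fintype_fun_eq_card,
    ← Nat.card_eq_fintype_card] at h
  omega

lemma finrank_ker_bnd (Q : Finset G.E) :
    Module.finrank (ZMod 2) (LinearMap.ker (G.bnd Q)) + Fintype.card G.V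
      = Q.card + Nat.card (G.CompV Q) := by
  have h1 := LinearMap.finrank_range_add_finrank_ker (G.bnd Q)
  rw [G.range_bnd Q, Module.finrank_fintype_fun_eq_card, Fintype.card_coe] at h1
  have h2 := G.finrank_ker_compSum Q
  omega

lemma exists_ker_bnd (Q : Finset G.E)
    (h : Fintype.card G.V + 1 ≤ Q.card + Nat.card (G.CompV Q)) :
    ∃ x, x ∈ LinearMap.ker (G.bnd Q) ∧ x ≠ 0 := by
  by_contra hno
  push_neg at hno
  have hbot : LinearMap.ker (G.bnd Q) = ⊥ := by
    rw [Submodule.eq_bot_iff]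
    exact fun x hx => by
      by_contra hx0
      exact hx0 (hno x hx)
  have := G.finrank_ker_bnd Q
  rw [hbot, finrank_bot] at this
  omega

lemma card_ge_of_ker (Q : Finset G.E) (x : {e : G.E // e ∈ Q} → ZMod 2)
    (hx : x ∈ LinearMap.ker (G.bnd Q)) (hx0 : x ≠ 0) :
    Fintype.card G.V + 1 ≤ Q.card + Nat.card (G.CompV Q) := by
  have h1 : 1 ≤ Module.finrank (ZMod 2) (LinearMap.ker (G.bnd Q)) := by
    by_contra hc
    have h0 : Module.finrank (ZMod 2) (LinearMap.ker (G.bnd Q)) = 0 := by omega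
    rw [Module.finrank_zero_iff] at h0
    exact hx0 (by
      have := h0.elim ⟨x, hx⟩ 0
      exact congrArg Subtype.val this)
  have := G.finrank_ker_bnd Q
  omega

lemma filter_mem_univ {α : Type} [Fintype α] [DecidableEq α] (s : Finset α) :
    univ.filter (fun x => x ∈ s) = s := by
  ext x; simp

lemma boundary_indicator_apply (P : Finset G.E) (v : G.V) :
    G.boundary (G.indicator P) v = ∑ e ∈ P, (G.degMul v e : ZMod 2) := by
  show (∑ e : G.E, (if e ∈ P then (1 : ZMod 2) else 0) * (G.degMul v e : ZMod 2)) = _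
  simp only [ite_mul, one_mul, zero_mul]
  rw [← Finset.sum_filter, filter_mem_univ]

lemma isCyclic_iff (P : Finset G.E) :
    G.IsCyclic P ↔ ∀ v : G.V, (∑ e ∈ P, (G.degMul v e : ZMod 2)) = 0 := by
  unfold IsCyclic
  rw [funext_iff]
  exact forall_congr' fun v => by rw [G.boundary_indicator_apply, Pi.zero_apply]

end LegGraph
namespace LegGraph

variable (G : LegGraph)

lemma sum_card_fiberV (Q : Finset G.E) :
    ∑ x : G.CompV Q, (G.fiberV Q x).card = Fintype.card G.V := by
  rw [← Finset.card_univ]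
  exact (Finset.card_eq_sum_card_fiberwise (M := G.CompV Q)
    (f := Quot.mk (G.PAdj Q)) (t := Finset.univ) (by intro v _; exact Finset.mem_univ _)).symm

lemma ends_endPair (e : G.E) : G.ends e = s((G.endPair e).1, (G.endPair e).2) :=
  (Classical.choose_spec (Quot.exists_rep (G.ends e))).symm

lemma endPair_fst_mem (e : G.E) : (G.endPair e).1 ∈ G.ends e := by
  rw [G.ends_endPair e]; exact Sym2.mem_mk_left _ _

lemma mem_of_mem_fiberE {Q : Finset G.E} {e : G.E} {x : G.CompV Q}
    (h : e ∈ G.fiberE Q x) : e ∈ Q := (Finset.mem_filter.mp h).1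

lemma ends_mk_of_mem_fiberE {Q : Finset G.E} {e : G.E} {x : G.CompV Q}
    (h : e ∈ G.fiberE Q x) : ∀ v ∈ G.ends e, Quot.mk (G.PAdj Q) v = x :=
  (Finset.mem_filter.mp h).2

lemma mem_fiberE_iff {Q : Finset G.E} {e : G.E} (he : e ∈ Q) {x : G.CompV Q} :
    e ∈ G.fiberE Q x ↔ Quot.mk (G.PAdj Q) (G.endPair e).1 = x := by
  constructor
  · intro h
    exact G.ends_mk_of_mem_fiberE h _ (G.endPair_fst_mem e)
  · intro h
    exact Finset.mem_filter.mpr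
      ⟨he, fun v hv => (G.mk_eq_of_mem_ends he hv (G.endPair_fst_mem e)).trans h⟩

lemma sum_card_fiberE (P : Finset G.E) :
    ∑ x : G.CompV P, (G.fiberE P x).card = P.card := by
  rw [Finset.card_eq_sum_card_fiberwise (M := G.CompV P)
    (f := fun e => Quot.mk (G.PAdj P) (G.endPair e).1) (t := Finset.univ)
    (by intro e _; exact Finset.mem_univ _)]
  refine Finset.sum_congr rfl fun x _ => congrArg Finset.card (Finset.ext fun e => ?_)
  rw [Finset.mem_filter]
  constructor
  · intro h
    exact ⟨G.mem_of_mem_fiberE h, (G.mem_fiberE_iff (G.mem_of_mem_fiberE h)).mp h⟩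
  · rintro ⟨heP, hx⟩
    exact (G.mem_fiberE_iff heP).mpr hx

lemma numComp_eq_one (h : G.Connected) : G.numComp = 1 := by
  unfold numComp
  rw [Nat.card_eq_one_iff_unique]
  constructor
  · constructor
    intro a b
    induction a using Quot.ind with | _ u =>
    induction b using Quot.ind with | _ v =>
    exact Quot.eq.mpr (h u v)
  · infer_instance

lemma sum_subtype_eq {Q : Finset G.E} (f : G.E → ZMod 2) :
    (∑ e : {e : G.E // e ∈ Q}, f e.1) = ∑ e ∈ Q, f e :=
  Finset.sum_coe_sort Q f

lemma ones_mem_ker (P : Finset G.E) (hcyc : G.IsCyclic P) :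
    (fun _ => 1 : {e : G.E // e ∈ P} → ZMod 2) ∈ LinearMap.ker (G.bnd P) := by
  rw [LinearMap.mem_ker]
  funext v
  show (∑ e : {e : G.E // e ∈ P}, (1 : ZMod 2) * (G.degMul v e.1 : ZMod 2)) = 0
  simp only [one_mul]
  rw [G.sum_subtype_eq (fun e => (G.degMul v e : ZMod 2))]
  exact (G.isCyclic_iff P).mp hcyc v

/-- From a nonempty cyclic edge set, counting: `|V| + 1 ≤ |P| + c_P`. -/
lemma card_bound_of_cyclic {P : Finset G.E} (hcyc : G.IsCyclic P) (hne : P.Nonempty) :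
    Fintype.card G.V + 1 ≤ P.card + Nat.card (G.CompV P) := by
  obtain ⟨e₀, he₀⟩ := hne
  refine G.card_ge_of_ker P (fun _ => 1) (G.ones_mem_ker P hcyc) ?_
  intro h0
  exact one_ne_zero (congrFun h0 ⟨e₀, he₀⟩)

/-- A nonempty cyclic edge set has a component with at least as many edges
as vertices, hence of positive genus. -/
lemma exists_pos_of_cyclic {P : Finset G.E} (hcyc : G.IsCyclic P) (hne : P.Nonempty) :
    ∃ x₀ : G.CompV P, (G.fiberV P x₀).card ≤ (G.fiberE P x₀).card := by
  by_contra hno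
  push_neg at hno
  have hall : ∀ x : G.CompV P, (G.fiberE P x).card + 1 ≤ (G.fiberV P x).card :=
    fun x => hno x
  have hsum := Finset.sum_le_sum (s := (univ : Finset (G.CompV P))) fun x _ => hall x
  rw [Finset.sum_add_distrib, G.sum_card_fiberE P, G.sum_card_fiberV P] at hsum
  have hcards : (∑ _x : G.CompV P, 1) = Nat.card (G.CompV P) := by
    rw [Finset.sum_const, smul_eq_mul, mul_one, Finset.card_univ, Nat.card_eq_fintype_card]
  rw [hcards] at hsum
  have := G.card_bound_of_cyclic hcyc hne
  omega

lemma quotWeight_pos_of_counts {P : Finset G.E} {x₀ : G.CompV P}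
    (h : (G.fiberV P x₀).card ≤ (G.fiberE P x₀).card) : 0 < G.quotWeight P x₀ := by
  unfold quotWeight
  omega

/-- Existence of a cyclic edge set with a component of positive genus, on any
stable graph of positive genus. -/
lemma exists_cyclic_pos (hst : G.Stable) (hg : 0 < G.genus) :
    ∃ P : Finset G.E, G.IsCyclic P ∧ ∃ x₀ : G.CompV P, 0 < G.quotWeight P x₀ := by
  by_cases hw : ∃ v, 0 < G.w v
  · obtain ⟨v, hv⟩ := hw
    refine ⟨∅, ?_, Quot.mk _ v, ?_⟩
    · rw [G.isCyclic_iff]; intro u; simp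
    · unfold quotWeight
      have hvmem : v ∈ G.fiberV ∅ (Quot.mk _ v) := G.mem_fiberV.mpr rfl
      have := Finset.single_le_sum (f := G.w) (fun i _ => Nat.zero_le _) hvmem
      omega
  · push_neg at hw
    have hwsum : ∑ v, G.w v = 0 := Finset.sum_eq_zero fun v _ => Nat.le_zero.mp (hw v)
    have hb : 0 < G.b1 := by unfold genus at hg; omega
    have hcard : Fintype.card G.V + 1
        ≤ (univ : Finset G.E).card + Nat.card (G.CompV (univ : Finset G.E)) := by
      unfold b1 numComp at hb
      rw [Finset.card_univ]
      omega
    obtain ⟨x, hxker, hx0⟩ := G.exists_ker_bnd univ hcard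
    set P : Finset G.E := univ.filter (fun e => x ⟨e, Finset.mem_univ e⟩ = 1) with hP
    have hcyc : G.IsCyclic P := by
      rw [G.isCyclic_iff]
      intro v
      have hv := congrFun (LinearMap.mem_ker.mp hxker) v
      rw [show (G.bnd univ x) v
          = ∑ e : {e : G.E // e ∈ (univ : Finset G.E)}, x e * (G.degMul v e.1 : ZMod 2)
          from rfl] at hv
      rw [Pi.zero_apply] at hv
      rw [← hv]
      have hre : ∀ e : {e : G.E // e ∈ (univ : Finset G.E)},
          x e * (G.degMul v e.1 : ZMod 2)
            = (if e.1 ∈ P then (1 : ZMod 2) else 0) * (G.degMul v e.1 : ZMod 2) := by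
        rintro ⟨e, he⟩
        by_cases hxe : x ⟨e, he⟩ = 1
        · rw [hxe, if_pos]
          rw [hP, Finset.mem_filter]
          exact ⟨Finset.mem_univ e, hxe⟩
        · have hx0' : x ⟨e, he⟩ = 0 := by
            by_contra hc
            exact hxe (zmod2_eq_one hc)
          rw [hx0', if_neg]
          rw [hP, Finset.mem_filter]
          rintro ⟨-, h1⟩
          rw [h1] at hx0'
          exact one_ne_zero hx0'
      rw [Finset.sum_congr rfl fun e _ => hre e,
        G.sum_subtype_eq (fun e => (if e ∈ P then (1 : ZMod 2) else 0) * (G.degMul v e : ZMod 2))]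
      simp only [ite_mul, one_mul, zero_mul]
      rw [← Finset.sum_filter]
      refine (Finset.sum_congr ?_ fun _ _ => rfl).symm
      ext e
      simp only [Finset.mem_filter, and_iff_right_iff_imp]
      exact fun _ => Finset.mem_univ e
    have hne : P.Nonempty := by
      obtain ⟨e₀, he₀⟩ := Function.ne_iff.mp hx0
      rw [Pi.zero_apply] at he₀
      refine ⟨e₀.1, ?_⟩
      rw [hP, Finset.mem_filter]
      exact ⟨Finset.mem_univ _, by
        have := zmod2_eq_one he₀
        rwa [show (⟨e₀.1, Finset.mem_univ e₀.1⟩ : {e : G.E // e ∈ (univ : Finset G.E)}) = e₀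
          from Subtype.ext rfl]⟩
    obtain ⟨x₀, hx₀⟩ := G.exists_pos_of_cyclic hcyc hne
    exact ⟨P, hcyc, x₀, G.quotWeight_pos_of_counts hx₀⟩

end LegGraph
namespace Contraction

variable {G G' : LegGraph} (γ : Contraction G G')

lemma mem_pushE {P : Finset G.E} {e' : G'.E} :
    e' ∈ γ.pushE P ↔ (γ.eEquiv e' : {e : G.E // e ∉ γ.F}).1 ∈ P := by
  unfold pushE
  simp

/-- The induced map on components `γ̄ : V(G/P) → V(G'/P')`. -/
def compMap (P : Finset G.E) : G.CompV P → G'.CompV (γ.pushE P) :=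
  Quot.lift (fun v => Quot.mk (G'.PAdj (γ.pushE P)) (γ.vMap v)) (by
    intro u v huv
    obtain ⟨e, heP, hu, hv⟩ := huv
    by_cases heF : e ∈ γ.F
    · show Quot.mk (G'.PAdj (γ.pushE P)) (γ.vMap u) = Quot.mk (G'.PAdj (γ.pushE P)) (γ.vMap v)
      rw [γ.collapse e heF u hu v hv]
    · refine Quot.sound ⟨γ.eEquiv.symm ⟨e, heF⟩, ?_, ?_, ?_⟩
      · rw [mem_pushE, Equiv.apply_symm_apply]
        exact heP
      · rw [γ.ends_compat, Equiv.apply_symm_apply, Sym2.mem_map]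
        exact ⟨u, hu, rfl⟩
      · rw [γ.ends_compat, Equiv.apply_symm_apply, Sym2.mem_map]
        exact ⟨v, hv, rfl⟩)

lemma compMap_mk (P : Finset G.E) (v : G.V) :
    γ.compMap P (Quot.mk (G.PAdj P) v) = Quot.mk (G'.PAdj (γ.pushE P)) (γ.vMap v) := rfl

lemma compMapsTo_iff {P : Finset G.E} {x : G.CompV P} {x' : G'.CompV (γ.pushE P)} :
    γ.compMapsTo P (γ.pushE P) x x' ↔ γ.compMap P x = x' := by
  constructor
  · rintro ⟨v, hvx, hvx'⟩
    rw [← hvx, compMap_mk, hvx']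
  · rintro rfl
    obtain ⟨v, hv⟩ := Quot.exists_rep x
    exact ⟨v, hv, by rw [← hv, compMap_mk]⟩

lemma pushS_delta (P : Finset G.E) (x₀ : G.CompV P) :
    γ.pushS P (fun x => if x = x₀ then 1 else 0)
      = fun x' => if x' = γ.compMap P x₀ then 1 else 0 := by
  funext x'
  unfold pushS
  rw [Finset.sum_congr
    (show Finset.univ.filter (fun x => γ.compMapsTo P (γ.pushE P) x x')
        = Finset.univ.filter (fun x => γ.compMap P x = x') from
      Finset.ext fun x => by simp [γ.compMapsTo_iff]) fun _ _ => rfl]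
  rw [Finset.sum_ite_eq' (Finset.univ.filter fun x => γ.compMap P x = x') x₀ fun _ => (1 : ZMod 2)]
  simp only [Finset.mem_filter, Finset.mem_univ, true_and]
  by_cases h : γ.compMap P x₀ = x'
  · rw [if_pos h, if_pos h.symm]
  · rw [if_neg h, if_neg (fun hc => h hc.symm)]

lemma pushS_zero (P : Finset G.E) : γ.pushS P (fun _ => 0) = fun _ => 0 := by
  funext x'
  unfold pushS
  exact Finset.sum_const_zero

lemma sum_degMul_fiber_eq_zero {e : G.E} (heF : e ∈ γ.F) (v' : G'.V) :
    (∑ v ∈ Finset.univ.filter fun v => γ.vMap v = v', (G.degMul v e : ZMod 2)) = 0 := by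
  obtain ⟨a, b, hab⟩ := G.ends_exists e
  rw [G.sum_degMul hab]
  have hcol : γ.vMap a = γ.vMap b :=
    γ.collapse e heF a (by rw [hab]; exact Sym2.mem_mk_left a b)
      b (by rw [hab]; exact Sym2.mem_mk_right a b)
  have hiff : a ∈ Finset.univ.filter (fun v => γ.vMap v = v')
      ↔ b ∈ Finset.univ.filter (fun v => γ.vMap v = v') := by
    simp [hcol]
  by_cases ha : a ∈ Finset.univ.filter (fun v => γ.vMap v = v')
  · rw [if_pos ha, if_pos (hiff.mp ha)]
    decide
  · rw [if_neg ha, if_neg (fun hb => ha (hiff.mpr hb)), add_zero]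

lemma sum_degMul_fiber_eq (v' : G'.V) (e' : G'.E) :
    (∑ v ∈ Finset.univ.filter fun v => γ.vMap v = v',
      (G.degMul v (γ.eEquiv e' : {e : G.E // e ∉ γ.F}).1 : ZMod 2))
      = (G'.degMul v' e' : ZMod 2) := by
  obtain ⟨a, b, hab⟩ := G.ends_exists (γ.eEquiv e' : {e : G.E // e ∉ γ.F}).1
  rw [G.sum_degMul hab]
  have hends : G'.ends e' = s(γ.vMap a, γ.vMap b) := by
    rw [γ.ends_compat, hab, Sym2.map_pair_eq]
  rw [G'.degMul_eq hends]
  push_cast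
  simp [Finset.mem_filter]

lemma sum_pushE {M : Type*} [AddCommMonoid M] (P : Finset G.E) (f : G.E → M) :
    (∑ e' ∈ γ.pushE P, f (γ.eEquiv e' : {e : G.E // e ∉ γ.F}).1)
      = ∑ e ∈ P.filter (fun e => e ∉ γ.F), f e := by
  refine Finset.sum_bij (fun e' _ => (γ.eEquiv e' : {e : G.E // e ∉ γ.F}).1) ?_ ?_ ?_ ?_
  · intro e' he'
    rw [Finset.mem_filter]
    exact ⟨γ.mem_pushE.mp he', (γ.eEquiv e').2⟩
  · intro a ha b hb hab
    exact γ.eEquiv.injective (Subtype.ext hab)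
  · intro e he
    rw [Finset.mem_filter] at he
    refine ⟨γ.eEquiv.symm ⟨e, he.2⟩, ?_, ?_⟩
    · rw [γ.mem_pushE, Equiv.apply_symm_apply]
      exact he.1
    · show ((γ.eEquiv (γ.eEquiv.symm ⟨e, he.2⟩) : {e : G.E // e ∉ γ.F})).1 = e
      rw [Equiv.apply_symm_apply]
  · intro e' _
    rfl

lemma pushE_cyclic {P : Finset G.E} (h : G.IsCyclic P) : G'.IsCyclic (γ.pushE P) := by
  rw [G'.isCyclic_iff]
  intro v'
  have h0 : (0 : ZMod 2)
      = ∑ e ∈ P, ∑ v ∈ Finset.univ.filter (fun v => γ.vMap v = v'), (G.degMul v e : ZMod 2) := by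
    rw [Finset.sum_comm]
    exact (Finset.sum_eq_zero fun v _ => (G.isCyclic_iff P).mp h v).symm
  rw [← Finset.sum_filter_add_sum_filter_not P (fun e => e ∈ γ.F)] at h0
  rw [Finset.sum_eq_zero (fun e he => γ.sum_degMul_fiber_eq_zero
    (Finset.mem_filter.mp he).2 v'), zero_add] at h0
  rw [← γ.sum_pushE P (fun e => ∑ v ∈ Finset.univ.filter (fun v => γ.vMap v = v'),
    (G.degMul v e : ZMod 2))] at h0
  rw [Finset.sum_congr rfl (fun e' _ => γ.sum_degMul_fiber_eq v' e')] at h0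
  exact h0.symm

end Contraction
namespace Contraction

variable {G G' : LegGraph} (γ : Contraction G G')

/-- The preimage in `V(G)` of the component `x₀'` of `G'/P'`. -/
def Uset (P : Finset G.E) (x₀' : G'.CompV (γ.pushE P)) : Finset G.V :=
  Finset.univ.filter fun v => Quot.mk (G'.PAdj (γ.pushE P)) (γ.vMap v) = x₀'

/-- The edges of `P ∪ F` with all endpoints in the preimage of `x₀'`. -/
def Tset (P : Finset G.E) (x₀' : G'.CompV (γ.pushE P)) : Finset G.E :=
  Finset.univ.filter fun e => (e ∈ P ∨ e ∈ γ.F) ∧ ∀ v ∈ G.ends e, v ∈ γ.Uset P x₀'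

lemma mem_Uset {P : Finset G.E} {x₀' : G'.CompV (γ.pushE P)} {v : G.V} :
    v ∈ γ.Uset P x₀' ↔ Quot.mk (G'.PAdj (γ.pushE P)) (γ.vMap v) = x₀' := by
  unfold Uset; simp

lemma mem_Tset {P : Finset G.E} {x₀' : G'.CompV (γ.pushE P)} {e : G.E} :
    e ∈ γ.Tset P x₀' ↔ (e ∈ P ∨ e ∈ γ.F) ∧ ∀ v ∈ G.ends e, v ∈ γ.Uset P x₀' := by
  unfold Tset; simp

lemma Uset_vMap_congr {P : Finset G.E} {x₀' : G'.CompV (γ.pushE P)} {u v : G.V}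
    (h : γ.vMap u = γ.vMap v) : u ∈ γ.Uset P x₀' ↔ v ∈ γ.Uset P x₀' := by
  rw [γ.mem_Uset, γ.mem_Uset, h]

/-- Paths through `F`-edges lift to paths through `Tset` as long as they start
in `Uset`. -/
lemma liftF {P : Finset G.E} {x₀' : G'.CompV (γ.pushE P)} {a b : G.V}
    (h : Relation.EqvGen (G.PAdj γ.F) a b) :
    γ.vMap a = γ.vMap b ∧
      (a ∈ γ.Uset P x₀' → Relation.EqvGen (G.PAdj (γ.Tset P x₀')) a b) := by
  induction h with
  | rel u v huv =>
    obtain ⟨e, heF, hu, hv⟩ := huv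
    have hcol : ∀ w ∈ G.ends e, γ.vMap w = γ.vMap u :=
      fun w hw => γ.collapse e heF w hw u hu
    refine ⟨(hcol v hv).symm, fun huU => ?_⟩
    have heT : e ∈ γ.Tset P x₀' := by
      rw [γ.mem_Tset]
      exact ⟨Or.inr heF, fun w hw => (γ.Uset_vMap_congr (hcol w hw)).mpr huU⟩
    exact Relation.EqvGen.rel u v ⟨e, heT, hu, hv⟩
  | refl u => exact ⟨rfl, fun _ => Relation.EqvGen.refl u⟩
  | symm u v h ih =>
    exact ⟨ih.1.symm, fun hvU =>
      Relation.EqvGen.symm u v (ih.2 ((γ.Uset_vMap_congr ih.1).mpr hvU))⟩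
  | trans u w v h1 h2 ih1 ih2 =>
    exact ⟨ih1.1.trans ih2.1, fun huU =>
      Relation.EqvGen.trans u w v (ih1.2 huU)
        (ih2.2 ((γ.Uset_vMap_congr ih1.1).mp huU))⟩

/-- Paths downstairs through `P'`-edges in the component `x₀'` lift to paths
upstairs through `Tset`. -/
lemma liftP {P : Finset G.E} {x₀' : G'.CompV (γ.pushE P)} {a' b' : G'.V}
    (h : Relation.EqvGen (G'.PAdj (γ.pushE P)) a' b') :
    Quot.mk (G'.PAdj (γ.pushE P)) a' = x₀' →
    ∀ a b : G.V, γ.vMap a = a' → γ.vMap b = b' →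
      Relation.EqvGen (G.PAdj (γ.Tset P x₀')) a b := by
  induction h with
  | rel u' v' huv =>
    intro hu'x a b ha hb
    obtain ⟨e', he'P, hu', hv'⟩ := huv
    have hv'x : Quot.mk (G'.PAdj (γ.pushE P)) v' = x₀' :=
      (Quot.sound ⟨e', he'P, hv', hu'⟩).trans hu'x
    set e := (γ.eEquiv e' : {e : G.E // e ∉ γ.F}).1 with he
    have heP : e ∈ P := γ.mem_pushE.mp he'P
    obtain ⟨p, q, hpq⟩ := G.ends_exists e
    have hends : G'.ends e' = s(γ.vMap p, γ.vMap q) := by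
      rw [γ.ends_compat, ← he, hpq, Sym2.map_pair_eq]
    have hpe' : γ.vMap p ∈ G'.ends e' := by rw [hends]; exact Sym2.mem_mk_left _ _
    have hqe' : γ.vMap q ∈ G'.ends e' := by rw [hends]; exact Sym2.mem_mk_right _ _
    have hpU : p ∈ γ.Uset P x₀' := by
      rw [γ.mem_Uset]
      exact (G'.mk_eq_of_mem_ends he'P hpe' hu').trans hu'x
    have hqU : q ∈ γ.Uset P x₀' := by
      rw [γ.mem_Uset]
      exact (G'.mk_eq_of_mem_ends he'P hqe' hu').trans hu'x
    have heT : e ∈ γ.Tset P x₀' := by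
      rw [γ.mem_Tset]
      refine ⟨Or.inl heP, fun w hw => ?_⟩
      rw [hpq, Sym2.mem_iff] at hw
      rcases hw with rfl | rfl
      · exact hpU
      · exact hqU
    have hpmem : p ∈ G.ends e := by rw [hpq]; exact Sym2.mem_mk_left _ _
    have hqmem : q ∈ G.ends e := by rw [hpq]; exact Sym2.mem_mk_right _ _
    have hcp : ∀ c : G.V, c ∈ γ.Uset P x₀' →
        (γ.vMap c = γ.vMap p ∨ γ.vMap c = γ.vMap q) →
        Relation.EqvGen (G.PAdj (γ.Tset P x₀')) c p := by
      intro c hcU hc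
      rcases hc with hc | hc
      · exact (γ.liftF (γ.fiber_conn c p hc)).2 hcU
      · refine Relation.EqvGen.trans c q p ((γ.liftF (γ.fiber_conn c q hc)).2 hcU) ?_
        exact Relation.EqvGen.rel q p ⟨e, heT, hqmem, hpmem⟩
    have haU : a ∈ γ.Uset P x₀' := by rw [γ.mem_Uset, ha]; exact hu'x
    have hbU : b ∈ γ.Uset P x₀' := by rw [γ.mem_Uset, hb]; exact hv'x
    rw [hends, Sym2.mem_iff] at hu' hv'
    refine Relation.EqvGen.trans a p b (hcp a haU ?_) (Relation.EqvGen.symm _ _ (hcp b hbU ?_))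
    · rw [ha]; exact hu'
    · rw [hb]; exact hv'
  | refl u' =>
    intro hu'x a b ha hb
    have haU : a ∈ γ.Uset P x₀' := by rw [γ.mem_Uset, ha]; exact hu'x
    exact (γ.liftF (γ.fiber_conn a b (ha.trans hb.symm))).2 haU
  | symm u' v' h ih =>
    intro hv'x a b ha hb
    have hu'x : Quot.mk (G'.PAdj (γ.pushE P)) u' = x₀' :=
      (Quot.eqvGen_sound h).trans hv'x
    exact Relation.EqvGen.symm _ _ (ih hu'x b a hb ha)
  | trans u' w' v' h1 h2 ih1 ih2 =>
    intro hu'x a b ha hb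
    obtain ⟨c, hc⟩ := γ.vSurj w'
    have hw'x : Quot.mk (G'.PAdj (γ.pushE P)) w' = x₀' :=
      (Quot.eqvGen_sound h1).symm.trans hu'x
    exact Relation.EqvGen.trans a c b (ih1 hu'x a c ha hc) (ih2 hw'x c b hc hb)

lemma Uset_one_class {P : Finset G.E} {x₀' : G'.CompV (γ.pushE P)} {u v : G.V}
    (hu : u ∈ γ.Uset P x₀') (hv : v ∈ γ.Uset P x₀') :
    Relation.EqvGen (G.PAdj (γ.Tset P x₀')) u v := by
  rw [γ.mem_Uset] at hu hv
  exact γ.liftP (Quot.eq.mp (hu.trans hv.symm)) hu u v rfl rfl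

lemma card_compV_Tset (P : Finset G.E) (x₀' : G'.CompV (γ.pushE P))
    (hUne : (γ.Uset P x₀').Nonempty) :
    Nat.card (G.CompV (γ.Tset P x₀')) + (γ.Uset P x₀').card = Fintype.card G.V + 1 := by
  obtain ⟨u₀, hu₀⟩ := hUne
  set U := γ.Uset P x₀' with hU
  set T := γ.Tset P x₀' with hT
  let φ : G.V → Option {v : G.V // v ∉ U} :=
    fun v => if h : v ∈ U then none else some ⟨v, h⟩
  have hresp : ∀ u v, G.PAdj T u v → φ u = φ v := by
    intro u v huv
    obtain ⟨e, heT, hume, hvme⟩ := huv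
    have hends := (γ.mem_Tset.mp heT).2
    show φ u = φ v
    show (if h : u ∈ U then none else some (⟨u, h⟩ : {v : G.V // v ∉ U}))
      = (if h : v ∈ U then none else some (⟨v, h⟩ : {v : G.V // v ∉ U}))
    rw [dif_pos (show u ∈ U from hends u hume), dif_pos (show v ∈ U from hends v hvme)]
  let ψ : G.CompV T → Option {v : G.V // v ∉ U} := Quot.lift φ hresp
  have hbij : Function.Bijective ψ := by
    constructor
    · intro x y
      induction x using Quot.ind with | _ u => ?_
      induction y using Quot.ind with | _ v => ?_
      intro hxy
      have hxy' : φ u = φ v := hxy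
      show Quot.mk (G.PAdj T) u = Quot.mk (G.PAdj T) v
      by_cases hu : u ∈ U
      · by_cases hv : v ∈ U
        · exact Quot.eq.mpr (γ.Uset_one_class hu hv)
        · exfalso
          simp only [φ, dif_pos hu, dif_neg hv] at hxy'
          exact nomatch hxy'
      · by_cases hv : v ∈ U
        · exfalso
          simp only [φ, dif_neg hu, dif_pos hv] at hxy'
          exact nomatch hxy'
        · simp only [φ, dif_neg hu, dif_neg hv, Option.some_inj, Subtype.mk.injEq] at hxy'
          rw [hxy']
    · intro o
      cases o with
      | none => exact ⟨Quot.mk _ u₀, by show φ u₀ = none; simp [φ, hu₀]⟩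
      | some v =>
        refine ⟨Quot.mk _ v.1, ?_⟩
        show φ v.1 = some v
        simp only [φ, dif_neg v.2]
  have hcard := Nat.card_eq_of_bijective ψ hbij
  rw [Nat.card_eq_fintype_card (α := Option {v : G.V // v ∉ U}), Fintype.card_option,
    Fintype.card_subtype_compl, Fintype.card_coe] at hcard
  have hle : U.card ≤ Fintype.card G.V := by
    rw [← Finset.card_univ]
    exact Finset.card_le_card (Finset.subset_univ U)
  omega

end Contraction
namespace Contraction

variable {G G' : LegGraph} (γ : Contraction G G')

lemma vMap_mem_fiberV' {P : Finset G.E} {x₀ : G.CompV P} {v : G.V}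
    (hv : v ∈ G.fiberV P x₀) :
    γ.vMap v ∈ G'.fiberV (γ.pushE P) (γ.compMap P x₀) := by
  rw [G'.mem_fiberV]
  rw [G.mem_fiberV] at hv
  rw [← hv, γ.compMap_mk]

/-- **Monotonicity**: a positive-genus component pushes forward to a
positive-genus component. -/
lemma quotWeight_pos_push {P : Finset G.E} (hcyc : G.IsCyclic P) (x₀ : G.CompV P)
    (h : 0 < G.quotWeight P x₀) :
    0 < G'.quotWeight (γ.pushE P) (γ.compMap P x₀) := by
  by_cases hw : ∃ v ∈ G.fiberV P x₀, 0 < G.w v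
  · obtain ⟨v, hvmem, hv⟩ := hw
    have hv' : γ.vMap v ∈ G'.fiberV (γ.pushE P) (γ.compMap P x₀) := γ.vMap_mem_fiberV' hvmem
    have h1 : 0 < G'.w (γ.vMap v) := by
      rw [γ.w_compat]
      have hvfib : v ∈ Finset.univ.filter (fun u => γ.vMap u = γ.vMap v) := by simp
      have := Finset.single_le_sum (f := G.w) (fun i _ => Nat.zero_le _) hvfib
      omega
    unfold LegGraph.quotWeight
    have := Finset.single_le_sum (f := G'.w) (fun i _ => Nat.zero_le _) hv'
    omega
  · push_neg at hw
    have hS : ∑ v ∈ G.fiberV P x₀, G.w v = 0 :=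
      Finset.sum_eq_zero fun v hv => Nat.le_zero.mp (hw v hv)
    have hEV : (G.fiberV P x₀).card ≤ (G.fiberE P x₀).card := by
      unfold LegGraph.quotWeight at h
      omega
    obtain ⟨v₀, hv₀⟩ := Quot.exists_rep x₀
    have hv₀fib : v₀ ∈ G.fiberV P x₀ := G.mem_fiberV.mpr hv₀
    have hVU : ∀ v ∈ G.fiberV P x₀, v ∈ γ.Uset P (γ.compMap P x₀) := by
      intro v hv
      rw [γ.mem_Uset]
      exact G'.mem_fiberV.mp (γ.vMap_mem_fiberV' hv)
    have hET : ∀ e ∈ G.fiberE P x₀, e ∈ γ.Tset P (γ.compMap P x₀) := by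
      intro e he
      rw [γ.mem_Tset]
      exact ⟨Or.inl (G.mem_of_mem_fiberE he), fun v hv =>
        hVU v (G.mem_fiberV.mpr (G.ends_mk_of_mem_fiberE he v hv))⟩
    -- the indicator of `fiberE P x₀` lies in the kernel of `bnd (Tset)`
    set y : {e : G.E // e ∈ γ.Tset P (γ.compMap P x₀)} → ZMod 2 :=
      fun e => if e.1 ∈ G.fiberE P x₀ then 1 else 0 with hy
    have hyker : y ∈ LinearMap.ker (G.bnd (γ.Tset P (γ.compMap P x₀))) := by
      rw [LinearMap.mem_ker]
      funext v
      show (∑ e : {e : G.E // e ∈ γ.Tset P (γ.compMap P x₀)},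
        (if e.1 ∈ G.fiberE P x₀ then (1 : ZMod 2) else 0) * (G.degMul v e.1 : ZMod 2)) = 0
      rw [G.sum_subtype_eq
        (fun e => (if e ∈ G.fiberE P x₀ then (1 : ZMod 2) else 0) * (G.degMul v e : ZMod 2))]
      simp only [ite_mul, one_mul, zero_mul]
      rw [← Finset.sum_filter]
      have hfil : (γ.Tset P (γ.compMap P x₀)).filter (fun e => e ∈ G.fiberE P x₀) = G.fiberE P x₀ := by
        ext e
        rw [Finset.mem_filter]
        exact ⟨fun h => h.2, fun h => ⟨hET e h, h⟩⟩
      rw [hfil]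
      by_cases hvx : Quot.mk (G.PAdj P) v = x₀
      · have hsub : G.fiberE P x₀ ⊆ P := fun e he => G.mem_of_mem_fiberE he
        have hzero : ∀ e ∈ P, e ∉ G.fiberE P x₀ → ((G.degMul v e : ℕ) : ZMod 2) = 0 := by
          intro e heP henot
          have hd0 : G.degMul v e = 0 := by
            by_contra hd
            refine henot (Finset.mem_filter.mpr ⟨heP, fun w hw => ?_⟩)
            exact (G.mk_eq_of_mem_ends heP hw (G.mem_of_degMul_ne hd)).trans hvx
          rw [hd0]
          norm_num
        rw [Finset.sum_subset hsub hzero]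
        exact (G.isCyclic_iff P).mp hcyc v
      · refine Finset.sum_eq_zero fun e he => ?_
        have hd0 : G.degMul v e = 0 := by
          by_contra hd
          exact hvx (G.ends_mk_of_mem_fiberE he v (G.mem_of_degMul_ne hd))
        rw [hd0]
        norm_num
    have hfEne : (G.fiberE P x₀).Nonempty := by
      have h1 := Finset.card_pos.mpr ⟨v₀, hv₀fib⟩
      exact Finset.card_pos.mp (by omega)
    have hy0 : y ≠ 0 := by
      obtain ⟨e₀, he₀⟩ := hfEne
      intro hc
      have := congrFun hc ⟨e₀, hET e₀ he₀⟩
      rw [hy] at this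
      simp only [if_pos he₀] at this
      exact one_ne_zero this
    have hTU : (γ.Uset P (γ.compMap P x₀)).card ≤ (γ.Tset P (γ.compMap P x₀)).card := by
      have hcardT := G.card_ge_of_ker (γ.Tset P (γ.compMap P x₀)) y hyker hy0
      have hcV := γ.card_compV_Tset P (γ.compMap P x₀) ⟨v₀, hVU v₀ hv₀fib⟩
      omega
    -- counting downstairs
    by_contra hq
    push_neg at hq
    have hq0 : G'.quotWeight (γ.pushE P) (γ.compMap P x₀) = 0 := Nat.le_zero.mp hq
    unfold LegGraph.quotWeight at hq0
    have hw'sum : ∑ v' ∈ G'.fiberV (γ.pushE P) (γ.compMap P x₀), G'.w v' = 0 := by omega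
    have hw' : ∀ v' ∈ G'.fiberV (γ.pushE P) (γ.compMap P x₀), G'.w v' = 0 :=
      fun v' hv' => (Finset.sum_eq_zero_iff.mp hw'sum) v' hv'
    have hB1 : (G'.fiberE (γ.pushE P) (γ.compMap P x₀)).card + 1 ≤ (G'.fiberV (γ.pushE P) (γ.compMap P x₀)).card := by omega
    have hperv : ∀ v' ∈ G'.fiberV (γ.pushE P) (γ.compMap P x₀),
        (γ.F.filter fun e => ∀ u ∈ G.ends e, γ.vMap u = v').card + 1
          ≤ (Finset.univ.filter fun v => γ.vMap v = v').card := by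
      intro v' hv'
      have h0 := hw' v' hv'
      rw [γ.w_compat] at h0
      omega
    -- Σ over X' of (A+1) ≤ Σ of N
    have hsum := Finset.sum_le_sum hperv
    rw [Finset.sum_add_distrib, Finset.sum_const, smul_eq_mul, mul_one] at hsum
    -- Σ N = U.card
    have hUX : ∀ v ∈ γ.Uset P (γ.compMap P x₀), γ.vMap v ∈ G'.fiberV (γ.pushE P) (γ.compMap P x₀) := by
      intro v hv
      rw [G'.mem_fiberV]
      exact (γ.mem_Uset).mp hv
    have hUcard := Finset.card_eq_sum_card_fiberwise hUX
    have hNU : ∑ v' ∈ G'.fiberV (γ.pushE P) (γ.compMap P x₀), (Finset.univ.filter fun v => γ.vMap v = v').card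
        = (γ.Uset P (γ.compMap P x₀)).card := by
      rw [hUcard]
      refine Finset.sum_congr rfl fun v' hv' => congrArg Finset.card (Finset.ext fun v => ?_)
      simp only [Finset.mem_filter, Finset.mem_univ, true_and]
      constructor
      · intro hvm
        refine ⟨?_, hvm⟩
        rw [γ.mem_Uset, hvm]
        exact G'.mem_fiberV.mp hv'
      · exact fun hh => hh.2
    -- A bound : card of F-edges of T
    have hTF : ∀ e ∈ (γ.Tset P (γ.compMap P x₀)).filter (fun e => e ∈ γ.F),
        γ.vMap (G.endPair e).1 ∈ G'.fiberV (γ.pushE P) (γ.compMap P x₀) := by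
      intro e he
      rw [Finset.mem_filter] at he
      exact hUX _ ((γ.mem_Tset.mp he.1).2 _ (G.endPair_fst_mem e))
    have hA1 := Finset.card_eq_sum_card_fiberwise hTF
    have hA2 : ∀ v' ∈ G'.fiberV (γ.pushE P) (γ.compMap P x₀),
        (((γ.Tset P (γ.compMap P x₀)).filter (fun e => e ∈ γ.F)).filter
            (fun e => γ.vMap (G.endPair e).1 = v')).card
          ≤ (γ.F.filter fun e => ∀ u ∈ G.ends e, γ.vMap u = v').card := by
      intro v' _
      refine Finset.card_le_card fun e he => ?_
      rw [Finset.mem_filter] at he ⊢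
      obtain ⟨heTF, hev⟩ := he
      rw [Finset.mem_filter] at heTF
      refine ⟨heTF.2, fun u hu => ?_⟩
      rw [← hev]
      exact γ.collapse e heTF.2 u hu _ (G.endPair_fst_mem e)
    have hAF : ((γ.Tset P (γ.compMap P x₀)).filter (fun e => e ∈ γ.F)).card
        ≤ ∑ v' ∈ G'.fiberV (γ.pushE P) (γ.compMap P x₀),
            (γ.F.filter fun e => ∀ u ∈ G.ends e, γ.vMap u = v').card := by
      rw [hA1]
      exact Finset.sum_le_sum hA2
    -- B bound : non-F edges of T inject into fiberE (γ.pushE P) (γ.compMap P x₀)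
    have hB : ((γ.Tset P (γ.compMap P x₀)).filter (fun e => e ∉ γ.F)).card ≤ (G'.fiberE (γ.pushE P) (γ.compMap P x₀)).card := by
      refine Finset.card_le_card_of_surjOn
        (fun e' => (γ.eEquiv e' : {e : G.E // e ∉ γ.F}).1) ?_
      intro e he
      rw [Finset.mem_coe, Finset.mem_filter] at he
      obtain ⟨heT, heF⟩ := he
      rw [γ.mem_Tset] at heT
      have heP : e ∈ P := heT.1.resolve_right heF
      refine ⟨γ.eEquiv.symm ⟨e, heF⟩, ?_, ?_⟩
      · refine Finset.mem_coe.mpr (Finset.mem_filter.mpr ⟨?_, ?_⟩)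
        · rw [γ.mem_pushE, Equiv.apply_symm_apply]
          exact heP
        · intro w hw
          rw [γ.ends_compat, Equiv.apply_symm_apply] at hw
          obtain ⟨u, hu, rfl⟩ := Sym2.mem_map.mp hw
          exact (γ.mem_Uset).mp (heT.2 u hu)
      · show ((γ.eEquiv (γ.eEquiv.symm ⟨e, heF⟩) : {e : G.E // e ∉ γ.F})).1 = e
        rw [Equiv.apply_symm_apply]
    -- T split
    have hTsplit := Finset.card_filter_add_card_filter_not
      (s := γ.Tset P (γ.compMap P x₀)) (p := fun e => e ∈ γ.F)
    omega

end Contraction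
lemma LegGraph.isCyclic_empty (G : LegGraph) : G.IsCyclic (∅ : Finset G.E) := by
  rw [G.isCyclic_iff]
  intro v
  simp

/-- The zero spin structure on a cyclic subset `P`. -/
def zeroSpin (G : LegGraph) (P : Finset G.E) (hcyc : G.IsCyclic P) : SpinStructure G where
  P := P
  cyclic := hcyc
  s := fun _ => 0
  vanish := fun _ _ => rfl

lemma zeroSpin_parity (G : LegGraph) (P : Finset G.E) (hcyc : G.IsCyclic P) :
    (zeroSpin G P hcyc).parity = 0 := by
  unfold SpinStructure.parity zeroSpin
  exact Finset.sum_const_zero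

/-- The pushforward of a spin structure along a contraction (given the
vanishing condition downstairs). -/
def pushSpin {G G' : LegGraph} (γ : Contraction G G') (σ : SpinStructure G)
    (hvan : ∀ x', G'.quotWeight (γ.pushE σ.P) x' = 0 → γ.pushS σ.P σ.s x' = 0) :
    SpinStructure G' where
  P := γ.pushE σ.P
  cyclic := γ.pushE_cyclic σ.cyclic
  s := γ.pushS σ.P σ.s
  vanish := hvan

lemma pushSpin_mapsTo {G G' : LegGraph} (γ : Contraction G G') (σ : SpinStructure G)
    (hvan : ∀ x', G'.quotWeight (γ.pushE σ.P) x' = 0 → γ.pushS σ.P σ.s x' = 0) :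
    γ.SpinMapsTo σ (pushSpin γ σ hvan) := ⟨rfl, HEq.rfl⟩

/-- The pushforward of the zero spin structure. -/
def pushZeroSpin {G G' : LegGraph} (γ : Contraction G G') (P : Finset G.E)
    (hcyc : G.IsCyclic P) : SpinStructure G' :=
  pushSpin γ (zeroSpin G P hcyc)
    (fun x' _ => congrFun (γ.pushS_zero P) x')

lemma pushZeroSpin_parity {G G' : LegGraph} (γ : Contraction G G') (P : Finset G.E)
    (hcyc : G.IsCyclic P) : (pushZeroSpin γ P hcyc).parity = 0 := by
  refine Finset.sum_eq_zero fun x' _ => ?_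
  exact congrFun (γ.pushS_zero P) x'

lemma pushZeroSpin_P {G G' : LegGraph} (γ : Contraction G G') (P : Finset G.E)
    (hcyc : G.IsCyclic P) : (pushZeroSpin γ P hcyc).P = γ.pushE P := rfl

lemma pushZeroSpin_mapsTo {G G' : LegGraph} (γ : Contraction G G') (P : Finset G.E)
    (hcyc : G.IsCyclic P) : γ.SpinMapsTo (zeroSpin G P hcyc) (pushZeroSpin γ P hcyc) :=
  pushSpin_mapsTo γ _ _

/-- The odd spin structure supported on a positive-genus component `x₀`. -/
def deltaSpin (G : LegGraph) (P : Finset G.E) (hcyc : G.IsCyclic P) (x₀ : G.CompV P)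
    (hx₀ : 0 < G.quotWeight P x₀) : SpinStructure G where
  P := P
  cyclic := hcyc
  s := fun x => if x = x₀ then 1 else 0
  vanish := fun x hx => by
    show (if x = x₀ then (1 : ZMod 2) else 0) = 0
    rw [if_neg]
    rintro rfl
    omega

lemma deltaSpin_parity (G : LegGraph) (P : Finset G.E) (hcyc : G.IsCyclic P) (x₀ : G.CompV P)
    (hx₀ : 0 < G.quotWeight P x₀) : (deltaSpin G P hcyc x₀ hx₀).parity = 1 := by
  unfold SpinStructure.parity deltaSpin
  rw [Finset.sum_ite_eq' Finset.univ x₀ fun _ => (1 : ZMod 2), if_pos (Finset.mem_univ x₀)]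

/-- The pushforward of `deltaSpin`. -/
def pushDeltaSpin {G G' : LegGraph} (γ : Contraction G G') (P : Finset G.E)
    (hcyc : G.IsCyclic P) (x₀ : G.CompV P) (hx₀ : 0 < G.quotWeight P x₀) :
    SpinStructure G' where
  P := γ.pushE P
  cyclic := γ.pushE_cyclic hcyc
  s := γ.pushS P (fun x => if x = x₀ then 1 else 0)
  vanish := fun x' hx' => by
    have hd := congrFun (γ.pushS_delta P x₀) x'
    rw [hd]
    show (if x' = γ.compMap P x₀ then (1 : ZMod 2) else 0) = 0
    rw [if_neg]
    rintro rfl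
    have := γ.quotWeight_pos_push hcyc x₀ hx₀
    omega

lemma pushDeltaSpin_parity {G G' : LegGraph} (γ : Contraction G G') (P : Finset G.E)
    (hcyc : G.IsCyclic P) (x₀ : G.CompV P) (hx₀ : 0 < G.quotWeight P x₀) :
    (pushDeltaSpin γ P hcyc x₀ hx₀).parity = 1 := by
  show (∑ x' : G'.CompV (γ.pushE P),
    γ.pushS P (fun x => if x = x₀ then 1 else 0) x') = 1
  rw [Finset.sum_congr rfl fun x' _ => congrFun (γ.pushS_delta P x₀) x']
  rw [Finset.sum_ite_eq' Finset.univ (γ.compMap P x₀) fun _ => (1 : ZMod 2),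
    if_pos (Finset.mem_univ _)]

lemma pushDeltaSpin_mapsTo {G G' : LegGraph} (γ : Contraction G G') (P : Finset G.E)
    (hcyc : G.IsCyclic P) (x₀ : G.CompV P) (hx₀ : 0 < G.quotWeight P x₀) :
    γ.SpinMapsTo (deltaSpin G P hcyc x₀ hx₀) (pushDeltaSpin γ P hcyc x₀ hx₀) :=
  ⟨rfl, HEq.rfl⟩

/-- Assume `2g − 2 + n > 0`.  The forgetful maps
`SP⁺_{g,n} → C_{g,n}`, `(G,P,s) ↦ (G,P)`, and `SP⁺_{g,n} → S_{g,n}`,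
`(G,P,s) ↦ G`, are quotients of posets for every `g`; and for `g > 0` the
forgetful map `SP⁻_{g,n} → S_{g,n}` is a quotient of posets. -/
theorem spin_forgetful_maps_are_poset_quotients (g n : ℕ)
    (h : 2 < 2 * g + n) :
    IsPosetQuotient
      (fun x y : {x : SpinObj // StG g n x.1 ∧ x.2.parity = 0} =>
        SpinGe x.1 y.1)
      (fun x y : {x : CycObj // StG g n x.1 ∧ x.1.IsCyclic x.2} =>
        CycGe x.1 y.1)
      (fun x => ⟨⟨x.1.1, x.1.2.P⟩, x.2.1, x.1.2.cyclic⟩) ∧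
    IsPosetQuotient
      (fun x y : {x : SpinObj // StG g n x.1 ∧ x.2.parity = 0} =>
        SpinGe x.1 y.1)
      (fun X Y : {H : LegGraph // StG g n H} => GraphGe X.1 Y.1)
      (fun x => ⟨x.1.1, x.2.1⟩) ∧
    (0 < g →
      IsPosetQuotient
        (fun x y : {x : SpinObj // StG g n x.1 ∧ x.2.parity = 1} =>
          SpinGe x.1 y.1)
        (fun X Y : {H : LegGraph // StG g n H} => GraphGe X.1 Y.1)
        (fun x => ⟨x.1.1, x.2.1⟩)) := by
  refine ⟨⟨?_, ?_, ?_⟩, ⟨?_, ?_, ?_⟩, fun hg => ⟨?_, ?_, ?_⟩⟩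
  -- Map 1 : SP⁺ → C
  · -- surjectivity
    rintro ⟨⟨Gb, Pb⟩, hstb, hcycb⟩
    exact ⟨⟨⟨Gb, zeroSpin Gb Pb hcycb⟩, hstb, zeroSpin_parity Gb Pb hcycb⟩, rfl⟩
  · -- order-preserving
    rintro a a' ⟨γ, hmaps⟩
    exact ⟨γ, hmaps.1.symm⟩
  · -- lifting
    rintro ⟨⟨Gb, Pb⟩, hstb, hcycb⟩ ⟨⟨Gb', Pb'⟩, hstb', hcycb'⟩ ⟨γ, hpush⟩
    refine ⟨⟨⟨Gb, zeroSpin Gb Pb hcycb⟩, hstb, zeroSpin_parity Gb Pb hcycb⟩,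
      ⟨⟨Gb', pushZeroSpin γ Pb hcycb⟩, hstb', pushZeroSpin_parity γ Pb hcycb⟩,
      rfl, ?_, γ, pushZeroSpin_mapsTo γ Pb hcycb⟩
    refine Subtype.ext ?_
    show (⟨Gb', γ.pushE Pb⟩ : CycObj) = ⟨Gb', Pb'⟩
    rw [hpush]
  -- Map 2 : SP⁺ → S
  · -- surjectivity
    rintro ⟨H, hstH⟩
    exact ⟨⟨⟨H, zeroSpin H ∅ H.isCyclic_empty⟩, hstH,
      zeroSpin_parity H ∅ H.isCyclic_empty⟩, rfl⟩
  · -- order-preserving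
    rintro a a' ⟨γ, _⟩
    exact ⟨γ⟩
  · -- lifting
    rintro ⟨GX, hstX⟩ ⟨GY, hstY⟩ ⟨γ⟩
    exact ⟨⟨⟨GX, zeroSpin GX ∅ GX.isCyclic_empty⟩, hstX,
        zeroSpin_parity GX ∅ GX.isCyclic_empty⟩,
      ⟨⟨GY, pushZeroSpin γ ∅ GX.isCyclic_empty⟩, hstY,
        pushZeroSpin_parity γ ∅ GX.isCyclic_empty⟩,
      rfl, rfl, γ, pushZeroSpin_mapsTo γ ∅ GX.isCyclic_empty⟩
  -- Map 3 : SP⁻ → S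
  · -- surjectivity
    rintro ⟨H, hstH⟩
    obtain ⟨P, hcyc, x₀, hx₀⟩ := H.exists_cyclic_pos hstH.1 (by rw [hstH.2.1]; exact hg)
    exact ⟨⟨⟨H, deltaSpin H P hcyc x₀ hx₀⟩, hstH, deltaSpin_parity H P hcyc x₀ hx₀⟩, rfl⟩
  · -- order-preserving
    rintro a a' ⟨γ, _⟩
    exact ⟨γ⟩
  · -- lifting
    rintro ⟨GX, hstX⟩ ⟨GY, hstY⟩ ⟨γ⟩
    obtain ⟨P, hcyc, x₀, hx₀⟩ := GX.exists_cyclic_pos hstX.1 (by rw [hstX.2.1]; exact hg)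
    exact ⟨⟨⟨GX, deltaSpin GX P hcyc x₀ hx₀⟩, hstX, deltaSpin_parity GX P hcyc x₀ hx₀⟩,
      ⟨⟨GY, pushDeltaSpin γ P hcyc x₀ hx₀⟩, hstY, pushDeltaSpin_parity γ P hcyc x₀ hx₀⟩,
      rfl, rfl, γ, pushDeltaSpin_mapsTo γ P hcyc x₀ hx₀⟩

end
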